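/- For every integer k there exist integers a, b, c, d, e, f satisfying a² + 2·c·e = k, b² + 2·d·f = -k, and a·b + c·f + d·e = 0. Equivalently, for every integer k there is a 3×2 integer matrix P with Pᵀ·diag(1,H)·P = k·diag(1,-1). (This is the algebraic content of: for every integer k there is a degree k map f: ℂP²♯(S²×S²) → ℂP²♯(ℂP²-bar); for even k = 2t take a=b=0, c=d=t, e=1, f=-1, and for odd k an explicit solution also exists.) -/
import Mathlib

theorem degree_cp2_s2s2_to_cp2_cp2bar (k : ℤ) :
    ∃ a b c d e f : ℤ,
      a ^ 2 + 2 * c * e = k ∧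
      b ^ 2 + 2 * d * f = -k ∧
      a * b + c * f + d * e = 0 := by
  rcases Int.even_or_odd k with ⟨t, ht⟩ | ⟨t, ht⟩
  · exact ⟨0, 0, t, t, 1, -1, by subst ht; ring, by subst ht; ring, by ring⟩
  · exact ⟨1, -1, t, t + 1, 1, -1, by subst ht; ring, by subst ht; ring, by ring⟩
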